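/- Let $(b_s)$ be a standard one-dimensional Brownian motion, $H : \mathbb{R}\to\mathbb{R}$ continuous and periodic of period $R$, $\kappa$ its mean over one period, $V = \frac{1}{R}\int_0^R (H(y)-\kappa)^2 dy$ its variance, and $M = \mathrm{Osc}(H)$. Then for all $t > 0$: $\Big|\mathbb{E}\Big[\int_0^t (H(b_s) - \kappa)^2\,ds\Big] - V t\Big| \le 4 M^2 R^2$. -/

import Mathlib

open MeasureTheory ProbabilityTheory intervalIntegral
open Real Filter Metric
open scoped NNReal ENNReal

/-- A standard one-dimensional Brownian motion started at `0`, under the probability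
measure `P`: continuous paths, independent increments, Gaussian increments. -/
structure IsBrownianMotion {Ω : Type*} [MeasurableSpace Ω] (P : Measure Ω)
    (B : ℝ → Ω → ℝ) : Prop where
  isProb : IsProbabilityMeasure P
  meas : ∀ t, Measurable (B t)
  init : ∀ᵐ ω ∂P, B 0 ω = 0
  cont : ∀ᵐ ω ∂P, Continuous fun t => B t ω
  indep : ∀ (n : ℕ) (t : ℕ → ℝ), Monotone t →
    iIndepFun
      (fun i : Fin n => fun ω => B (t (i + 1)) ω - B (t i) ω) P
  gauss : ∀ s t : ℝ, 0 ≤ s → s ≤ t →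
    Measure.map (fun ω => B t ω - B s ω) P = gaussianReal 0 (Real.toNNReal (t - s))

lemma gaussianPDFReal_std (z : ℝ) :
    gaussianPDFReal 0 1 z = (Real.sqrt (2 * Real.pi))⁻¹ * Real.exp (-z ^ 2 / 2) := by
  rw [gaussianPDFReal]
  norm_num

lemma continuous_gaussianPDFReal_std : Continuous (gaussianPDFReal 0 1) := by
  simp only [funext gaussianPDFReal_std]
  fun_prop

lemma integral_gaussian_std (f : ℝ → ℝ) :
    ∫ z, f z ∂(gaussianReal 0 1) = ∫ z, gaussianPDFReal 0 1 z * f z := by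
  rw [gaussianReal_of_var_ne_zero 0 one_ne_zero]
  have : (gaussianPDF 0 1) = fun z => ((Real.toNNReal (gaussianPDFReal 0 1 z) : ℝ≥0) : ℝ≥0∞) := rfl
  rw [this, integral_withDensity_eq_integral_smul
      (by exact (measurable_gaussianPDFReal 0 1).real_toNNReal)]
  congr 1
  ext z
  simp [NNReal.smul_def, Real.coe_toNNReal _ (gaussianPDFReal_nonneg 0 1 z)]

lemma abs_le_exp_sq (z : ℝ) : |z| ≤ Real.exp (z ^ 2 / 4) := by
  have h1 : |z| ≤ 1 + z ^ 2 / 4 := by nlinarith [sq_nonneg (|z| - 2), sq_abs z, abs_nonneg z]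
  calc |z| ≤ 1 + z ^ 2 / 4 := h1
    _ ≤ Real.exp (z ^ 2 / 4) := by
        have := Real.add_one_le_exp (z ^ 2 / 4); linarith

lemma integrable_gauss_decay : Integrable (fun z : ℝ => Real.exp (-z ^ 2 / 2)) := by
  have := integrable_exp_neg_mul_sq (b := (1:ℝ)/2) (by norm_num)
  convert this using 2 with z
  ring_nf

lemma integrable_abs_gauss_decay : Integrable (fun z : ℝ => |z| * Real.exp (-z ^ 2 / 2)) := by
  have hint := integrable_exp_neg_mul_sq (b := (1:ℝ)/4) (by norm_num)
  refine hint.mono' (continuous_abs.mul (by fun_prop)).aestronglyMeasurable (Filter.Eventually.of_forall fun z => ?_)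
  have h1 : |z| ≤ Real.exp (z ^ 2 / 4) := abs_le_exp_sq z
  have h2 : (0:ℝ) < Real.exp (-z ^ 2 / 2) := Real.exp_pos _
  rw [Real.norm_eq_abs, abs_of_nonneg (by positivity)]
  calc |z| * Real.exp (-z ^ 2 / 2) ≤ Real.exp (z ^ 2 / 4) * Real.exp (-z ^ 2 / 2) := by
        exact mul_le_mul_of_nonneg_right h1 h2.le
    _ = Real.exp (-(1/4) * z ^ 2) := by rw [← Real.exp_add]; ring_nf

lemma integrable_abs_gaussian : Integrable (fun z : ℝ => |z|) (gaussianReal 0 1) := by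
  rw [gaussianReal_of_var_ne_zero 0 one_ne_zero]
  have hm : Measurable fun z : ℝ => Real.toNNReal (gaussianPDFReal 0 1 z) :=
    (measurable_gaussianPDFReal 0 1).real_toNNReal
  rw [show (gaussianPDF 0 1) = fun z => ((Real.toNNReal (gaussianPDFReal 0 1 z) : ℝ≥0) : ℝ≥0∞)
      from rfl]
  rw [integrable_withDensity_iff_integrable_coe_smul hm]
  have heq : (fun z : ℝ => ((Real.toNNReal (gaussianPDFReal 0 1 z) : ℝ≥0) : ℝ) • |z|)
      = fun z : ℝ => gaussianPDFReal 0 1 z * |z| := by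
    ext z
    rw [smul_eq_mul, Real.coe_toNNReal _ (gaussianPDFReal_nonneg 0 1 z)]
  rw [heq]
  refine (integrable_abs_gauss_decay.const_mul ((Real.sqrt (2 * Real.pi))⁻¹)).mono'
    ((continuous_gaussianPDFReal_std.mul continuous_abs).aestronglyMeasurable)
    (Filter.Eventually.of_forall fun z => ?_)
  have h0 : (0:ℝ) ≤ gaussianPDFReal 0 1 z := gaussianPDFReal_nonneg 0 1 z
  rw [Real.norm_eq_abs, abs_of_nonneg (by positivity), gaussianPDFReal_std]
  have hk : (0:ℝ) ≤ (Real.sqrt (2 * Real.pi))⁻¹ := by positivity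
  nlinarith [abs_nonneg z, Real.exp_pos (-z ^ 2 / 2)]

lemma tendsto_bdd_gauss_atTop {f : ℝ → ℝ} {A : ℝ} (hA : ∀ z, |f z| ≤ A) :
    Tendsto (fun z => f z * Real.exp (-z ^ 2 / 2)) atTop (nhds 0) := by
  apply squeeze_zero_norm (a := fun z : ℝ => A * Real.exp (-(z ^ 2 / 2))) (fun z => ?_)
    (by
      have h1 : Tendsto (fun z : ℝ => z ^ 2 / 2) atTop atTop := by
        apply Filter.Tendsto.atTop_div_const (by norm_num)
        exact tendsto_pow_atTop (two_ne_zero)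
      have h2 : Tendsto (fun z : ℝ => Real.exp (-(z ^ 2 / 2))) atTop (nhds 0) :=
        Real.tendsto_exp_atBot.comp (tendsto_neg_atBot_iff.mpr h1)
      have h3 : Tendsto (fun z : ℝ => A * Real.exp (-(z ^ 2 / 2))) atTop (nhds (A * 0)) :=
        h2.const_mul A
      simpa using h3)
  show ‖f z * Real.exp (-z ^ 2 / 2)‖ ≤ A * Real.exp (-(z ^ 2 / 2))
  rw [Real.norm_eq_abs, abs_mul, abs_of_nonneg (Real.exp_pos _).le, neg_div]
  exact mul_le_mul_of_nonneg_right (hA z) (Real.exp_pos _).le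

lemma tendsto_bdd_gauss_atBot {f : ℝ → ℝ} {A : ℝ} (hA : ∀ z, |f z| ≤ A) :
    Tendsto (fun z => f z * Real.exp (-z ^ 2 / 2)) atBot (nhds 0) := by
  have := tendsto_bdd_gauss_atTop (f := fun z => f (-z)) (A := A) (fun z => hA (-z))
  have h2 : Tendsto (fun z : ℝ => -z) atBot atTop := tendsto_neg_atBot_atTop
  have h3 := this.comp h2
  have : ((fun z => f (-z) * Real.exp (-z ^ 2 / 2)) ∘ fun z : ℝ => -z)
      = fun z => f z * Real.exp (-z ^ 2 / 2) := by
    ext z; simp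
  rwa [this] at h3

/-- Gaussian integration by parts: `E[Z f(Z)] = E[f'(Z)]`. -/
lemma gaussian_ibp (f f' : ℝ → ℝ) (hd : ∀ z, HasDerivAt f (f' z) z) (hf'c : Continuous f')
    {A B : ℝ} (hA : ∀ z, |f z| ≤ A) (hB : ∀ z, |f' z| ≤ B) :
    ∫ z, z * f z ∂(gaussianReal 0 1) = ∫ z, f' z ∂(gaussianReal 0 1) := by
  have hfc : Continuous f := continuous_iff_continuousAt.2 fun z => (hd z).continuousAt
  set p : ℝ → ℝ := fun z => Real.exp (-z ^ 2 / 2) with hp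
  have hpc : Continuous p := by fun_prop
  have hpnn : ∀ z, 0 ≤ p z := fun z => (Real.exp_pos _).le
  set g' : ℝ → ℝ := fun z => f' z * p z + f z * (p z * -z) with hg'def
  have hg : ∀ z, HasDerivAt (fun z => f z * p z) (g' z) z := by
    intro z
    have h1 : HasDerivAt (fun z : ℝ => -z ^ 2 / 2) (-z) z := by
      have := ((hasDerivAt_pow 2 z).neg.div_const 2)
      simpa [neg_div] using this
    have h2 : HasDerivAt p (p z * -z) z := h1.exp
    exact (hd z).mul h2
  have hg'int : Integrable g' := by
    refine Integrable.add ?_ ?_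
    · refine (integrable_gauss_decay.const_mul B).mono'
        ((hf'c.mul hpc).aestronglyMeasurable) (Filter.Eventually.of_forall fun z => ?_)
      rw [Real.norm_eq_abs, abs_mul, abs_of_nonneg (hpnn z)]
      exact mul_le_mul_of_nonneg_right (hB z) (hpnn z)
    · refine (integrable_abs_gauss_decay.const_mul A).mono'
        ((hfc.mul (hpc.mul continuous_neg)).aestronglyMeasurable)
        (Filter.Eventually.of_forall fun z => ?_)
      rw [Real.norm_eq_abs, abs_mul, abs_mul, abs_neg, abs_of_nonneg (hpnn z)]
      have h0 : 0 ≤ A := le_trans (abs_nonneg _) (hA 0)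
      calc |f z| * (p z * |z|) ≤ A * (p z * |z|) := by
            exact mul_le_mul_of_nonneg_right (hA z) (by positivity)
        _ = A * (|z| * p z) := by ring
  have total : ∫ z, g' z = 0 := by
    have := MeasureTheory.integral_of_hasDerivAt_of_tendsto hg hg'int
      (tendsto_bdd_gauss_atBot hA) (tendsto_bdd_gauss_atTop hA)
    simpa using this
  rw [integral_gaussian_std, integral_gaussian_std]
  set K : ℝ := (Real.sqrt (2 * Real.pi))⁻¹ with hK
  have hKnn : 0 ≤ K := by positivity
  have hpdf : ∀ z, gaussianPDFReal 0 1 z = K * p z := fun z => gaussianPDFReal_std z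
  have I1 : Integrable (fun z => gaussianPDFReal 0 1 z * (z * f z)) := by
    refine (integrable_abs_gauss_decay.const_mul (K * A)).mono'
      ((continuous_gaussianPDFReal_std.mul ((continuous_id.mul hfc))).aestronglyMeasurable)
      (Filter.Eventually.of_forall fun z => ?_)
    rw [hpdf z, Real.norm_eq_abs, abs_mul, abs_mul, abs_mul,
      abs_of_nonneg hKnn, abs_of_nonneg (hpnn z)]
    have h0 : 0 ≤ A := le_trans (abs_nonneg _) (hA 0)
    calc K * p z * (|z| * |f z|) ≤ K * p z * (|z| * A) := by
          refine mul_le_mul_of_nonneg_left (mul_le_mul_of_nonneg_left (hA z) (abs_nonneg z)) ?_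
          positivity
      _ = K * A * (|z| * p z) := by ring
  have I2 : Integrable (fun z => gaussianPDFReal 0 1 z * f' z) := by
    refine (integrable_gauss_decay.const_mul (K * B)).mono'
      ((continuous_gaussianPDFReal_std.mul hf'c).aestronglyMeasurable)
      (Filter.Eventually.of_forall fun z => ?_)
    rw [hpdf z, Real.norm_eq_abs, abs_mul, abs_mul, abs_of_nonneg hKnn, abs_of_nonneg (hpnn z)]
    have h0 : 0 ≤ B := le_trans (abs_nonneg _) (hB 0)
    calc K * p z * |f' z| ≤ K * p z * B := by
          refine mul_le_mul_of_nonneg_left (hB z) (by positivity)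
      _ = K * B * p z := by ring
  have hsub : ∫ z, (gaussianPDFReal 0 1 z * (z * f z) - gaussianPDFReal 0 1 z * f' z) = 0 := by
    have heq : (fun z => gaussianPDFReal 0 1 z * (z * f z) - gaussianPDFReal 0 1 z * f' z)
        = fun z => -K * g' z := by
      ext z
      rw [hpdf z, hg'def]
      ring
    rw [heq, MeasureTheory.integral_const_mul, total, mul_zero]
  rw [MeasureTheory.integral_sub I1 I2] at hsub
  linarith

/-- Integrability of bounded continuous functions against a probability measure. -/
lemma integrable_of_bdd_cont {μ : Measure ℝ} [IsProbabilityMeasure μ] {f : ℝ → ℝ} {C : ℝ}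
    (hf : Continuous f) (hC : ∀ x, |f x| ≤ C) : Integrable f μ :=
  (integrable_const C).mono' hf.aestronglyMeasurable (Filter.Eventually.of_forall hC)

/-- The heat semigroup derivative: `d/ds E[G(√s Z)] = (1/2) E[G''(√s Z)]` for `s > 0`. -/
lemma hasDerivAt_gauss_heat (G G' G'' : ℝ → ℝ)
    (hG : ∀ x, HasDerivAt G (G' x) x) (hG' : ∀ x, HasDerivAt G' (G'' x) x)
    (hG''c : Continuous G'') {CG CG' CG'' : ℝ}
    (bG : ∀ x, |G x| ≤ CG) (bG' : ∀ x, |G' x| ≤ CG') (bG'' : ∀ x, |G'' x| ≤ CG'')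
    {s : ℝ} (hs : 0 < s) :
    HasDerivAt (fun u => ∫ z, G (Real.sqrt u * z) ∂(gaussianReal 0 1))
      (2⁻¹ * ∫ z, G'' (Real.sqrt s * z) ∂(gaussianReal 0 1)) s := by
  have hGc : Continuous G := continuous_iff_continuousAt.2 fun z => (hG z).continuousAt
  have hG'c : Continuous G' := continuous_iff_continuousAt.2 fun z => (hG' z).continuousAt
  have hs2 : (0:ℝ) < Real.sqrt (s / 2) := Real.sqrt_pos.2 (by linarith)
  have hCG'0 : 0 ≤ CG' := le_trans (abs_nonneg _) (bG' 0)
  -- derivative inside the ball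
  have hball : ∀ u ∈ ball s (s / 2), ∀ z : ℝ,
      HasDerivAt (fun u => G (Real.sqrt u * z)) (G' (Real.sqrt u * z) * (z / (2 * Real.sqrt u))) u := by
    intro u hu z
    have hu0 : s / 2 < u := by
      have := abs_lt.1 (mem_ball_iff_norm.1 hu)
      linarith [this.1]
    have h1 : HasDerivAt Real.sqrt (1 / (2 * Real.sqrt u)) u :=
      Real.hasDerivAt_sqrt (by linarith : (0:ℝ) < u).ne'
    have h2 : HasDerivAt (fun u => Real.sqrt u * z) (1 / (2 * Real.sqrt u) * z) u :=
      h1.mul_const z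
    have h3 := (hG (Real.sqrt u * z)).comp u h2
    exact h3.congr_deriv (by ring)
  have hsqrt_lb : ∀ u ∈ ball s (s / 2), Real.sqrt (s / 2) ≤ Real.sqrt u := by
    intro u hu
    have := abs_lt.1 (mem_ball_iff_norm.1 hu)
    exact Real.sqrt_le_sqrt (by linarith [this.1])
  have key := hasDerivAt_integral_of_dominated_loc_of_deriv_le
    (μ := gaussianReal 0 1) (x₀ := s)
    (F := fun u z => G (Real.sqrt u * z))
    (F' := fun u z => G' (Real.sqrt u * z) * (z / (2 * Real.sqrt u)))
    (bound := fun z => CG' * |z| / (2 * Real.sqrt (s / 2)))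
    (ball_mem_nhds s (half_pos hs))
    (Filter.Eventually.of_forall fun u =>
      (hGc.comp (continuous_const.mul continuous_id)).aestronglyMeasurable)
    (integrable_of_bdd_cont (hGc.comp (continuous_const.mul continuous_id)) fun z => bG _)
    ((hG'c.comp (continuous_const.mul continuous_id)).mul (by fun_prop)).aestronglyMeasurable
    (Filter.Eventually.of_forall fun z u hu => by
      have h1 := hsqrt_lb u hu
      have hu0 : 0 < Real.sqrt u := lt_of_lt_of_le hs2 h1
      rw [Real.norm_eq_abs, abs_mul, abs_div, abs_mul, abs_two, abs_of_nonneg hu0.le]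
      show |G' (Real.sqrt u * z)| * (|z| / (2 * Real.sqrt u)) ≤ CG' * |z| / (2 * Real.sqrt (s/2))
      rw [mul_div_assoc']
      gcongr
      exact bG' _)
    (((integrable_abs_gaussian.const_mul CG').div_const _))
    (Filter.Eventually.of_forall fun z u hu => hball u hu z)
  obtain ⟨-, hder⟩ := key
  -- now rewrite the derivative value
  have hval : ∫ z, G' (Real.sqrt s * z) * (z / (2 * Real.sqrt s)) ∂(gaussianReal 0 1)
      = 2⁻¹ * ∫ z, G'' (Real.sqrt s * z) ∂(gaussianReal 0 1) := by
    have hss : 0 < Real.sqrt s := Real.sqrt_pos.2 hs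
    have heq : (fun z => G' (Real.sqrt s * z) * (z / (2 * Real.sqrt s)))
        = fun z => (2 * Real.sqrt s)⁻¹ * (z * G' (Real.sqrt s * z)) := by
      ext z; field_simp
    rw [heq, MeasureTheory.integral_const_mul]
    have hibp := gaussian_ibp (fun z => G' (Real.sqrt s * z))
      (fun z => Real.sqrt s * G'' (Real.sqrt s * z))
      (fun z => by
        have h2 : HasDerivAt (fun z : ℝ => Real.sqrt s * z) (Real.sqrt s) z := by
          simpa using (hasDerivAt_id z).const_mul (Real.sqrt s)
        have := (hG' (Real.sqrt s * z)).comp z h2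
        exact this.congr_deriv (by ring))
      (by fun_prop)
      (A := CG') (B := Real.sqrt s * CG'')
      (fun z => bG' _)
      (fun z => by
        rw [abs_mul, abs_of_nonneg hss.le]
        exact mul_le_mul_of_nonneg_left (bG'' _) hss.le)
    rw [hibp, MeasureTheory.integral_const_mul, ← mul_assoc]
    congr 1
    field_simp
  rwa [hval] at hder

/-- Continuity in `s` of `E[f(√s Z)]` for bounded continuous `f`. -/
lemma continuous_gauss_param (f : ℝ → ℝ) (hf : Continuous f) {C : ℝ} (hC : ∀ x, |f x| ≤ C) :
    Continuous fun s => ∫ z, f (Real.sqrt s * z) ∂(gaussianReal 0 1) := by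
  refine continuous_of_dominated (bound := fun _ => C)
    (fun s => (hf.comp (continuous_const.mul continuous_id)).aestronglyMeasurable)
    (fun s => Filter.Eventually.of_forall fun z => hC _)
    (integrable_const C)
    (Filter.Eventually.of_forall fun z => ?_)
  exact hf.comp ((Real.continuous_sqrt).mul continuous_const)

/-- FTC for the heat semigroup: `∫₀ᵗ E[G''(√s Z)] ds = 2 E[G(√t Z)]` when `G 0 = 0`. -/
lemma gauss_heat_integral (G G' G'' : ℝ → ℝ)
    (hG : ∀ x, HasDerivAt G (G' x) x) (hG' : ∀ x, HasDerivAt G' (G'' x) x)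
    (hG''c : Continuous G'') {CG CG' CG'' : ℝ}
    (bG : ∀ x, |G x| ≤ CG) (bG' : ∀ x, |G' x| ≤ CG') (bG'' : ∀ x, |G'' x| ≤ CG'')
    (hG0 : G 0 = 0) {t : ℝ} (ht : 0 < t) :
    ∫ s in (0:ℝ)..t, (∫ z, G'' (Real.sqrt s * z) ∂(gaussianReal 0 1))
      = 2 * ∫ z, G (Real.sqrt t * z) ∂(gaussianReal 0 1) := by
  have hGc : Continuous G := continuous_iff_continuousAt.2 fun z => (hG z).continuousAt
  set ψ : ℝ → ℝ := fun s => ∫ z, G (Real.sqrt s * z) ∂(gaussianReal 0 1) with hψ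
  set w : ℝ → ℝ := fun s => ∫ z, G'' (Real.sqrt s * z) ∂(gaussianReal 0 1) with hw
  have hψc : Continuous ψ := continuous_gauss_param G hGc bG
  have hwc : Continuous w := continuous_gauss_param G'' hG''c bG''
  have hψ0 : ψ 0 = 0 := by
    simp [hψ, Real.sqrt_zero, hG0]
  have hftc : ∫ s in (0:ℝ)..t, 2⁻¹ * w s = ψ t - ψ 0 := by
    refine intervalIntegral.integral_eq_sub_of_hasDeriv_right_of_le ht.le
      hψc.continuousOn (fun s hs => ?_) ?_
    · exact (hasDerivAt_gauss_heat G G' G'' hG hG' hG''c bG bG' bG'' hs.1).hasDerivWithinAt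
    · exact ((continuous_const.mul hwc)).intervalIntegrable 0 t
  rw [intervalIntegral.integral_const_mul] at hftc
  rw [hψ0, sub_zero] at hftc
  show ∫ s in (0:ℝ)..t, w s = 2 * ψ t
  rw [← hftc]
  ring

/-- The deterministic heat-semigroup estimate:
`|∫₀ᵗ E[φ(√s Z)] ds − V t| ≤ 4 C R²` for `φ` periodic with values in `[0, C]`. -/
theorem aux_homog (φ : ℝ → ℝ) (R C t : ℝ) (hR : 0 < R) (ht : 0 < t)
    (hφc : Continuous φ) (hφper : Function.Periodic φ R)
    (h0 : ∀ x, 0 ≤ φ x) (h1 : ∀ x, φ x ≤ C) :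
    |(∫ s in (0:ℝ)..t, ∫ z, φ (Real.sqrt s * z) ∂(gaussianReal 0 1))
        - ((1/R) * ∫ y in (0:ℝ)..R, φ y) * t| ≤ 4 * C * R ^ 2 := by
  have hC0 : 0 ≤ C := le_trans (h0 0) (h1 0)
  set V : ℝ := (1/R) * ∫ y in (0:ℝ)..R, φ y with hVdef
  have hφint : ∀ a c : ℝ, IntervalIntegrable φ volume a c := fun a c =>
    hφc.intervalIntegrable a c
  have hV0 : 0 ≤ V := by
    have := intervalIntegral.integral_nonneg (μ := volume) hR.le (fun y _ => h0 y)
    rw [hVdef]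
    positivity
  have hV1 : V ≤ C := by
    have h2 : ∫ y in (0:ℝ)..R, φ y ≤ ∫ y in (0:ℝ)..R, C :=
      intervalIntegral.integral_mono_on hR.le (hφint 0 R) intervalIntegrable_const
        (fun y _ => h1 y)
    rw [intervalIntegral.integral_const, smul_eq_mul, sub_zero] at h2
    rw [hVdef]
    rw [div_mul_eq_mul_div, one_mul, div_le_iff₀ hR]
    linarith
  have hφV : ∀ x, |φ x - V| ≤ C := fun x =>
    abs_le.2 ⟨by linarith [h0 x], by linarith [h1 x]⟩
  -- the first antiderivative F
  set F : ℝ → ℝ := fun x => ∫ y in (0:ℝ)..x, (φ y - V) with hFdef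
  have hφVc : Continuous (fun y => φ y - V) := hφc.sub continuous_const
  have hFder : ∀ x, HasDerivAt F (φ x - V) x := fun x =>
    intervalIntegral.integral_hasDerivAt_right (hφVc.intervalIntegrable _ _)
      hφVc.stronglyMeasurable.stronglyMeasurableAtFilter hφVc.continuousAt
  have hFc : Continuous F := continuous_iff_continuousAt.2 fun x => (hFder x).continuousAt
  have hφVper : Function.Periodic (fun y => φ y - V) R := fun x => by simp [hφper x]
  have hzero : ∫ y in (0:ℝ)..R, (φ y - V) = 0 := by
    rw [intervalIntegral.integral_sub (hφint 0 R) intervalIntegrable_const,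
      intervalIntegral.integral_const, smul_eq_mul, sub_zero, hVdef]
    field_simp
    ring
  have hFper : Function.Periodic F R := by
    intro x
    have h2 : ∫ y in x..(x + R), (φ y - V) = ∫ y in (0:ℝ)..(0 + R), (φ y - V) :=
      hφVper.intervalIntegral_add_eq x 0
    rw [zero_add, hzero] at h2
    have h3 := intervalIntegral.integral_add_adjacent_intervals (μ := volume)
      (hφVc.intervalIntegrable 0 x) (hφVc.intervalIntegrable x (x + R))
    show (∫ y in (0:ℝ)..(x+R), (φ y - V)) = ∫ y in (0:ℝ)..x, (φ y - V)
    rw [← h3, h2, add_zero]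
  have hFbd : ∀ x, |F x| ≤ C * R := by
    intro x
    obtain ⟨y, hy, hxy⟩ := hFper.exists_mem_Ico₀ hR x
    rw [hxy]
    have h2 : ‖∫ u in (0:ℝ)..y, (φ u - V)‖ ≤ C * |y - 0| :=
      intervalIntegral.norm_integral_le_of_norm_le_const fun u _ => by
        rw [Real.norm_eq_abs]; exact hφV u
    rw [Real.norm_eq_abs] at h2
    calc |F y| ≤ C * |y - 0| := h2
      _ ≤ C * R := by
          rw [sub_zero, abs_of_nonneg hy.1]
          exact mul_le_mul_of_nonneg_left hy.2.le hC0
  -- the second antiderivative G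
  set c : ℝ := ∫ y in (0:ℝ)..R, F y with hcdef
  have hcbd : |c| ≤ C * R * R := by
    have h2 : ‖∫ y in (0:ℝ)..R, F y‖ ≤ C * R * |R - 0| :=
      intervalIntegral.norm_integral_le_of_norm_le_const fun u _ => by
        rw [Real.norm_eq_abs]; exact hFbd u
    rw [Real.norm_eq_abs, sub_zero, abs_of_nonneg hR.le] at h2
    exact h2
  set G : ℝ → ℝ := fun x => (∫ y in (0:ℝ)..x, F y) - x / R * c with hGdef
  set G' : ℝ → ℝ := fun x => F x - c / R with hG'def
  have hGder : ∀ x, HasDerivAt G (G' x) x := by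
    intro x
    have h2 : HasDerivAt (fun x => ∫ y in (0:ℝ)..x, F y) (F x) x :=
      intervalIntegral.integral_hasDerivAt_right (hFc.intervalIntegrable _ _)
        hFc.stronglyMeasurable.stronglyMeasurableAtFilter hFc.continuousAt
    have h3 : HasDerivAt (fun x : ℝ => x / R * c) (c / R) x := by
      have := ((hasDerivAt_id x).div_const R).mul_const c
      exact this.congr_deriv (by ring)
    exact h2.sub h3
  have hG'der : ∀ x, HasDerivAt G' (φ x - V) x := fun x => (hFder x).sub_const _
  have hG'bd : ∀ x, |G' x| ≤ 2 * (C * R) := by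
    intro x
    have h2 : |c / R| ≤ C * R := by
      rw [abs_div, abs_of_pos hR, div_le_iff₀ hR]
      exact hcbd
    calc |G' x| ≤ |F x| + |c / R| := abs_sub _ _
      _ ≤ C * R + C * R := add_le_add (hFbd x) h2
      _ = 2 * (C * R) := by ring
  have hG0 : G 0 = 0 := by simp [hGdef]
  have hGper : Function.Periodic G R := by
    intro x
    have h2 : ∫ y in x..(x + R), F y = ∫ y in (0:ℝ)..(0 + R), F y :=
      hFper.intervalIntegral_add_eq x 0
    rw [zero_add, ← hcdef] at h2
    have h3 := intervalIntegral.integral_add_adjacent_intervals (μ := volume)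
      (hFc.intervalIntegrable 0 x) (hFc.intervalIntegrable x (x + R))
    show ((∫ y in (0:ℝ)..(x + R), F y) - (x + R) / R * c) = (∫ y in (0:ℝ)..x, F y) - x / R * c
    rw [← h3, h2]
    field_simp
    ring
  have hGbd : ∀ x, |G x| ≤ 2 * (C * R ^ 2) := by
    intro x
    obtain ⟨y, hy, hxy⟩ := hGper.exists_mem_Ico₀ hR x
    rw [hxy]
    have h2 : |∫ u in (0:ℝ)..y, F u| ≤ C * R * |y - 0| := by
      have := intervalIntegral.norm_integral_le_of_norm_le_const
        (C := C * R) (a := (0:ℝ)) (b := y) (f := F) fun u _ => by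
          rw [Real.norm_eq_abs]; exact hFbd u
      rwa [Real.norm_eq_abs] at this
    rw [sub_zero, abs_of_nonneg hy.1] at h2
    have h3 : |y / R * c| ≤ C * R * R := by
      rw [abs_mul, abs_div, abs_of_pos hR, abs_of_nonneg hy.1]
      have h4 : y / R ≤ 1 := by rw [div_le_one hR]; exact hy.2.le
      have h5 : 0 ≤ y / R := div_nonneg hy.1 hR.le
      calc y / R * |c| ≤ 1 * |c| := mul_le_mul_of_nonneg_right h4 (abs_nonneg _)
        _ = |c| := one_mul _
        _ ≤ C * R * R := hcbd
    calc |G y| ≤ |∫ u in (0:ℝ)..y, F u| + |y / R * c| := abs_sub _ _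
      _ ≤ C * R * R + C * R * R := add_le_add (le_trans h2 (mul_le_mul_of_nonneg_left hy.2.le (by positivity))) h3
      _ = 2 * (C * R ^ 2) := by ring
  -- heat semigroup identity
  have key := gauss_heat_integral G G' (fun x => φ x - V) hGder hG'der hφVc
    hGbd hG'bd hφV hG0 ht
  have hφbd : ∀ x, |φ x| ≤ C := fun x => by rw [abs_of_nonneg (h0 x)]; exact h1 x
  have hsplit : ∀ s : ℝ, ∫ z, (φ (Real.sqrt s * z) - V) ∂(gaussianReal 0 1)
      = (∫ z, φ (Real.sqrt s * z) ∂(gaussianReal 0 1)) - V := by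
    intro s
    have hi : Integrable (fun z => φ (Real.sqrt s * z)) (gaussianReal 0 1) :=
      integrable_of_bdd_cont (hφc.comp (continuous_const.mul continuous_id)) (fun z => hφbd _)
    rw [MeasureTheory.integral_sub hi (integrable_const V), MeasureTheory.integral_const]
    simp
  rw [intervalIntegral.integral_congr (fun s _ => hsplit s)] at key
  have hvc : Continuous fun s => ∫ z, φ (Real.sqrt s * z) ∂(gaussianReal 0 1) :=
    continuous_gauss_param φ hφc hφbd
  rw [intervalIntegral.integral_sub (hvc.intervalIntegrable 0 t) intervalIntegrable_const,
    intervalIntegral.integral_const, smul_eq_mul, sub_zero] at key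
  have hψbd : |∫ z, G (Real.sqrt t * z) ∂(gaussianReal 0 1)| ≤ 2 * (C * R ^ 2) := by
    have h2 := norm_integral_le_of_norm_le_const (μ := gaussianReal 0 1)
      (C := 2 * (C * R ^ 2)) (f := fun z => G (Real.sqrt t * z))
      (Filter.Eventually.of_forall fun z => by rw [Real.norm_eq_abs]; exact hGbd _)
    rwa [Real.norm_eq_abs, probReal_univ, mul_one] at h2
  calc |(∫ s in (0:ℝ)..t, ∫ z, φ (Real.sqrt s * z) ∂(gaussianReal 0 1)) - V * t|
      = |(∫ s in (0:ℝ)..t, ∫ z, φ (Real.sqrt s * z) ∂(gaussianReal 0 1)) - t * V| := by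
        rw [mul_comm]
    _ = |2 * ∫ z, G (Real.sqrt t * z) ∂(gaussianReal 0 1)| := by rw [← key]
    _ ≤ 2 * (2 * (C * R ^ 2)) := by
        rw [abs_mul, abs_of_nonneg (by norm_num : (0:ℝ) ≤ 2)]
        linarith [hψbd]
    _ = 4 * C * R ^ 2 := by ring

theorem bm_expectation_bridge {Ω : Type*} [MeasurableSpace Ω]
    (P : Measure Ω) (b : ℝ → Ω → ℝ) (hb : IsBrownianMotion P b)
    (φ : ℝ → ℝ) (hφc : Continuous φ) {C : ℝ} (hbd : ∀ x, |φ x| ≤ C)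
    {t : ℝ} (ht : 0 < t) :
    ∫ ω, (∫ s in (0:ℝ)..t, φ (b s ω)) ∂P
      = ∫ s in (0:ℝ)..t, (∫ z, φ (Real.sqrt s * z) ∂(gaussianReal 0 1)) := by
  classical
  haveI := hb.isProb
  -- modification with everywhere-continuous paths
  set N : Set Ω := toMeasurable P {ω | ¬ Continuous fun s => b s ω} with hNdef
  have hNmeas : MeasurableSet N := measurableSet_toMeasurable _ _
  have hNnull : P N = 0 := by
    rw [hNdef, measure_toMeasurable]
    exact ae_iff.1 hb.cont
  have hae : ∀ᵐ ω ∂P, ω ∉ N := measure_eq_zero_iff_ae_notMem.1 hNnull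
  set b' : ℝ → Ω → ℝ := fun s ω => if ω ∈ N then 0 else b s ω with hb'def
  have hb'm : ∀ s, StronglyMeasurable (b' s) := fun s =>
    (Measurable.ite hNmeas measurable_const (hb.meas s)).stronglyMeasurable
  have hb'c : ∀ ω, Continuous fun s => b' s ω := by
    intro ω
    by_cases hω : ω ∈ N
    · simp only [hb'def, if_pos hω]; exact continuous_const
    · simp only [hb'def, if_neg hω]
      by_contra hc
      exact hω (subset_toMeasurable _ _ hc)
  have hUnc : StronglyMeasurable (Function.uncurry b') :=
    stronglyMeasurable_uncurry_of_continuous_of_stronglyMeasurable hb'c hb'm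
  -- replacing b by b'
  have E1 : ∫ ω, (∫ s in (0:ℝ)..t, φ (b s ω)) ∂P
      = ∫ ω, (∫ s in (0:ℝ)..t, φ (b' s ω)) ∂P := by
    refine integral_congr_ae ?_
    filter_upwards [hae] with ω hω
    exact intervalIntegral.integral_congr fun s _ => by rw [hb'def]; simp [if_neg hω]
  -- Fubini
  haveI : IsFiniteMeasure (volume.restrict (Set.Ioc (0:ℝ) t)) := by
    constructor
    rw [Measure.restrict_apply_univ, Real.volume_Ioc]
    exact ENNReal.ofReal_lt_top
  have hintP : Integrable (Function.uncurry fun s ω => φ (b' s ω))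
      ((volume.restrict (Set.Ioc (0:ℝ) t)).prod P) := by
    have hm : AEStronglyMeasurable (Function.uncurry fun s ω => φ (b' s ω))
        ((volume.restrict (Set.Ioc (0:ℝ) t)).prod P) := by
      have : Function.uncurry (fun s ω => φ (b' s ω)) = φ ∘ Function.uncurry b' := rfl
      rw [this]
      exact (hφc.comp_stronglyMeasurable hUnc).aestronglyMeasurable
    exact (integrable_const C).mono' hm
      (Filter.Eventually.of_forall fun p => by rw [Real.norm_eq_abs]; exact hbd _)
  have E2 : ∫ ω, (∫ s in Set.Ioc (0:ℝ) t, φ (b' s ω)) ∂P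
      = ∫ s in Set.Ioc (0:ℝ) t, (∫ ω, φ (b' s ω) ∂P) :=
    (integral_integral_swap hintP).symm
  -- identification of the law of b s
  have law : ∀ s : ℝ, 0 < s → ∫ ω, φ (b' s ω) ∂P
      = ∫ z, φ (Real.sqrt s * z) ∂(gaussianReal 0 1) := by
    intro s hs
    have e1 : ∫ ω, φ (b' s ω) ∂P = ∫ ω, φ (b s ω) ∂P := by
      refine integral_congr_ae ?_
      filter_upwards [hae] with ω hω
      rw [hb'def]; simp [if_neg hω]
    have hmap : Measure.map (b s) P = gaussianReal 0 (Real.toNNReal s) := by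
      have h1 := hb.gauss 0 s le_rfl hs.le
      have h2 : (fun ω => b s ω - b 0 ω) =ᵐ[P] b s := by
        filter_upwards [hb.init] with ω hω
        rw [hω, sub_zero]
      rw [Measure.map_congr h2] at h1
      simpa using h1
    have hscale : gaussianReal 0 (Real.toNNReal s)
        = Measure.map (fun z => Real.sqrt s * z) (gaussianReal 0 1) := by
      have h2 := gaussianReal_map_const_mul (μ := 0) (v := 1) (Real.sqrt s)
      rw [show ((Real.sqrt s * ·) : ℝ → ℝ) = fun z => Real.sqrt s * z from rfl] at h2
      rw [h2, mul_zero]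
      congr 1
      ext
      simp [Real.sq_sqrt hs.le, Real.coe_toNNReal _ hs.le]
    rw [e1, ← integral_map (hb.meas s).aemeasurable hφc.aestronglyMeasurable, hmap, hscale,
      integral_map (measurable_const_mul _).aemeasurable hφc.aestronglyMeasurable]
  have E3 : ∫ s in Set.Ioc (0:ℝ) t, (∫ ω, φ (b' s ω) ∂P)
      = ∫ s in Set.Ioc (0:ℝ) t, (∫ z, φ (Real.sqrt s * z) ∂(gaussianReal 0 1)) := by
    refine setIntegral_congr_fun measurableSet_Ioc fun s hs => ?_
    exact law s hs.1
  rw [E1]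
  rw [show (fun ω => ∫ s in (0:ℝ)..t, φ (b' s ω))
      = fun ω => ∫ s in Set.Ioc (0:ℝ) t, φ (b' s ω) from
    funext fun ω => intervalIntegral.integral_of_le ht.le]
  rw [E2, E3, intervalIntegral.integral_of_le ht.le]

/-- Quantitative homogenization estimate: for `H` continuous `R`-periodic with mean `κ`,
variance `V` and oscillation at most `M`, `|E[∫₀ᵗ (H(b_s)-κ)² ds] - Vt| ≤ 4M²R²`. -/
theorem homogenization_additive_functional {Ω : Type*} [MeasurableSpace Ω]
    (P : Measure Ω) (b : ℝ → Ω → ℝ) (hb : IsBrownianMotion P b)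
    (H : ℝ → ℝ) (R M t : ℝ) (hR : 0 < R) (ht : 0 < t)
    (hcont : Continuous H) (hper : Function.Periodic H R)
    (hosc : ∀ x y, H x - H y ≤ M) :
    |(∫ ω, (∫ s in (0:ℝ)..t,
          (H (b s ω) - (1/R) * ∫ y in (0:ℝ)..R, H y) ^ 2) ∂P)
        - ((1/R) * ∫ y in (0:ℝ)..R, (H y - (1/R) * ∫ z in (0:ℝ)..R, H z) ^ 2) * t|
      ≤ 4 * M ^ 2 * R ^ 2 := by
  haveI := hb.isProb
  set κ : ℝ := (1/R) * ∫ y in (0:ℝ)..R, H y with hκ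
  have hM0 : (0:ℝ) ≤ M := by simpa using hosc 0 0
  have hHκ : ∀ x, |H x - κ| ≤ M := by
    intro x
    have hiH : IntervalIntegrable H MeasureTheory.volume 0 R := hcont.intervalIntegrable 0 R
    have hic : IntervalIntegrable (fun y => H x - H y) MeasureTheory.volume 0 R :=
      (continuous_const.sub hcont).intervalIntegrable 0 R
    have hub : ∫ y in (0:ℝ)..R, (H x - H y) ≤ M * R := by
      calc ∫ y in (0:ℝ)..R, (H x - H y)
          ≤ ∫ _y in (0:ℝ)..R, M := intervalIntegral.integral_mono_on hR.le hic
            intervalIntegrable_const (fun y _ => hosc x y)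
        _ = M * R := by
            rw [intervalIntegral.integral_const, smul_eq_mul, sub_zero, mul_comm]
    have hlb : -(M * R) ≤ ∫ y in (0:ℝ)..R, (H x - H y) := by
      calc -(M * R) = ∫ _y in (0:ℝ)..R, (-M) := by
            rw [intervalIntegral.integral_const, smul_eq_mul, sub_zero]; ring
        _ ≤ ∫ y in (0:ℝ)..R, (H x - H y) :=
            intervalIntegral.integral_mono_on hR.le intervalIntegrable_const hic
              (fun y _ => by have := hosc y x; linarith)
    have hint : ∫ y in (0:ℝ)..R, (H x - H y) = R * H x - ∫ y in (0:ℝ)..R, H y := by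
      rw [intervalIntegral.integral_sub intervalIntegrable_const hiH,
        intervalIntegral.integral_const, smul_eq_mul, sub_zero, mul_comm]
    have hxκ : H x - κ = (1/R) * ∫ y in (0:ℝ)..R, (H x - H y) := by
      rw [hint, hκ]; field_simp
    have hRinv : (0:ℝ) < 1/R := by positivity
    rw [hxκ, abs_le]
    constructor
    · calc -M = (1/R) * (-(M * R)) := by field_simp
        _ ≤ (1/R) * ∫ y in (0:ℝ)..R, (H x - H y) :=
            mul_le_mul_of_nonneg_left hlb hRinv.le
    · calc (1/R) * ∫ y in (0:ℝ)..R, (H x - H y) ≤ (1/R) * (M * R) :=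
            mul_le_mul_of_nonneg_left hub hRinv.le
        _ = M := by field_simp
  have hφc : Continuous (fun x => (H x - κ) ^ 2) := (hcont.sub continuous_const).pow 2
  have hφper : Function.Periodic (fun x => (H x - κ) ^ 2) R := fun x => by simp [hper x]
  have h0 : ∀ x, 0 ≤ (H x - κ) ^ 2 := fun x => sq_nonneg _
  have h1 : ∀ x, (H x - κ) ^ 2 ≤ M ^ 2 := fun x => by
    calc (H x - κ) ^ 2 = |H x - κ| ^ 2 := (sq_abs _).symm
      _ ≤ M ^ 2 := pow_le_pow_left₀ (abs_nonneg _) (hHκ x) 2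
  have hbd : ∀ x, |(H x - κ) ^ 2| ≤ M ^ 2 := fun x => by
    rw [abs_of_nonneg (h0 x)]; exact h1 x
  have key1 : (∫ ω, (∫ s in (0:ℝ)..t, (H (b s ω) - κ) ^ 2) ∂P)
      = ∫ s in (0:ℝ)..t, (∫ z, (H (Real.sqrt s * z) - κ) ^ 2 ∂(gaussianReal 0 1)) :=
    bm_expectation_bridge P b hb (fun x => (H x - κ) ^ 2) hφc hbd ht
  have key2 : |(∫ s in (0:ℝ)..t, (∫ z, (H (Real.sqrt s * z) - κ) ^ 2 ∂(gaussianReal 0 1)))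
      - ((1/R) * ∫ y in (0:ℝ)..R, (H y - κ) ^ 2) * t| ≤ 4 * M ^ 2 * R ^ 2 :=
    aux_homog (fun x => (H x - κ) ^ 2) R (M ^ 2) t hR ht hφc hφper h0 h1
  rw [key1]
  exact key2
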